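/- In the locally convex cone (P,V), for each w ∈ V and k ∈ ℕ the extended functional (1/w)~_k (equal to a_k ↦ a/w on Q_k, 0 at 0₀, and +∞ outside Q_k) lies in the polar (w/k)°; moreover if a_i ⪯ b_j + v with j ∉ {0, k}, then (1/w)~_k(a_i) ≤ (1/w)~_k(b_j) + 1 for all v, w ∈ V. -/

import Mathlib

open scoped NNReal ENNReal

/-- The positive reals, used for the values `a` in elements `a_i`. -/
abbrev Rpos := {a : ℝ // 0 < a}

/-- The cone `P = {a_i : a ∈ (0,∞), i ∈ ℕ} ∪ {0₀, ∞_∞}`. -/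
inductive CP : Type where
  | zero : CP
  | inf : CP
  | elt : Rpos → ℕ+ → CP

namespace CP

/-- Addition on `P`. -/
def add : CP → CP → CP
  | zero, x => x
  | x, zero => x
  | inf, _ => inf
  | _, inf => inf
  | elt a i, elt b j =>
      if i = j then elt ⟨a.1 + b.1, add_pos a.2 b.2⟩ i else inf

/-- Scalar multiplication by nonnegative reals on `P`. -/
noncomputable def smul (r : ℝ≥0) (x : CP) : CP :=
  if h : r = 0 then zero
  else
    match x with
    | zero => zero
    | inf => inf
    | elt a i => elt ⟨(r : ℝ) * a.1,
        mul_pos (by exact_mod_cast pos_iff_ne_zero.mpr h) a.2⟩ i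

/-- The preorder on `P`: `a_i ⪯ b_j` iff `i = j` and `a ≤ b`. -/
def le : CP → CP → Prop
  | zero, zero => True
  | inf, inf => True
  | elt a i, elt b j => i = j ∧ a.1 ≤ b.1
  | _, _ => False

/-- The neighborhood relation: `nrel v x y` means `x ⪯ y + v`. -/
def nrel (v : ℝ) : CP → CP → Prop
  | zero, _ => True
  | _, inf => True
  | elt a i, elt b j => i = j ∧ a.1 ≤ b.1 + (i : ℝ) * v
  | _, _ => False

/-- The subcone `Q_j = {b_j : b ∈ (0,∞)} ∪ {0₀, ∞_∞}`. -/
def Q (j : ℕ+) : Set CP := {x | x = zero ∨ x = inf ∨ ∃ a : Rpos, x = elt a j}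

/-- Symmetric neighborhood of `b` relative to the subcone `Qs`. -/
def symN (Qs : Set CP) (v : ℝ) (b : CP) : Set CP :=
  {a ∈ Qs | nrel v a b ∧ nrel v b a}

/-- Linearity of a functional `μ : P → ℝ ∪ {+∞}` relative to a subcone. -/
def IsLinearOn (Qs : Set CP) (μ : CP → EReal) : Prop :=
  μ zero = 0 ∧ (∀ x, μ x ≠ ⊥) ∧
  (∀ x ∈ Qs, ∀ y ∈ Qs, μ (add x y) = μ x + μ y) ∧
  (∀ r : ℝ≥0, ∀ x ∈ Qs, μ (smul r x) = ((r : ℝ) : EReal) * μ x)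

/-- (Uniform) continuity of a functional relative to a subcone. -/
def IsContOn (Qs : Set CP) (μ : CP → EReal) : Prop :=
  ∃ v : ℝ, 0 < v ∧ ∀ x ∈ Qs, ∀ y ∈ Qs, nrel v x y → μ x ≤ μ y + 1

/-- Membership in the dual cone of the subcone `Qs`. -/
def InDualOn (Qs : Set CP) (μ : CP → EReal) : Prop :=
  IsLinearOn Qs μ ∧ IsContOn Qs μ

/-- `λ B = {(λx, λy) : (x,y) ∈ B}`. -/
def scaleSet (l : ℝ≥0) (B : Set (CP × CP)) : Set (CP × CP) :=
  (fun p => (smul l p.1, smul l p.2)) '' B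

/-- `B` is a barrel in the subcone `Qs`. -/
def IsBarrelOn (Qs : Set CP) (B : Set (CP × CP)) : Prop :=
  (∀ p ∈ B, p.1 ∈ Qs ∧ p.2 ∈ Qs) ∧
  (∀ p ∈ B, ∀ q ∈ B, ∀ t : ℝ≥0, t ≤ 1 →
     (add (smul t p.1) (smul (1 - t) q.1),
      add (smul t p.2) (smul (1 - t) q.2)) ∈ B) ∧
  (∀ b ∈ Qs, ∃ v : ℝ, 0 < v ∧ ∀ a ∈ symN Qs v b,
     ∃ l : ℝ≥0, 0 < l ∧ (a, b) ∈ scaleSet l B) ∧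
  (∀ a ∈ Qs, ∀ b ∈ Qs, (a, b) ∉ B → ∃ μ : CP → EReal, InDualOn Qs μ ∧
     μ b + 1 < μ a ∧ ∀ p ∈ B, μ p.1 ≤ μ p.2 + 1)

/-- The subcone `Qs` is barreled. -/
def BarreledOn (Qs : Set CP) : Prop :=
  ∀ B, IsBarrelOn Qs B → ∀ b ∈ Qs, ∃ v : ℝ, 0 < v ∧ ∃ l : ℝ≥0, 0 < l ∧
    ∀ a ∈ symN Qs v b, (a, b) ∈ scaleSet l B

/-- The subcone `Qs` is upper-barreled. -/
def UpperBarreledOn (Qs : Set CP) : Prop :=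
  ∀ B, IsBarrelOn Qs B → ∃ v : ℝ, 0 < v ∧
    ∀ p : CP × CP, p.1 ∈ Qs → p.2 ∈ Qs → nrel v p.1 p.2 → p ∈ B

/-- The functional `∞̄` (resp. its extension `∞̄~`). -/
noncomputable def fnBarInf : CP → EReal
  | zero => 0
  | _ => ⊤

/-- The functional `0̄_k` (resp. its extension). -/
noncomputable def fnBarZero (k : ℕ+) : CP → EReal
  | zero => 0
  | inf => ⊤
  | elt _ i => if i = k then 0 else ⊤

/-- The functional `c_k : a_k ↦ c·a` (extended by `+∞` off `Q_k`). -/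
noncomputable def fnLam (c : ℝ) (k : ℕ+) : CP → EReal
  | zero => 0
  | inf => ⊤
  | elt a i => if i = k then ((c * a.1 : ℝ) : EReal) else ⊤

/-- The zero functional. -/
noncomputable def fnZero : CP → EReal := fun _ => 0

/-- The barrel `B_j = {(x,y) ∈ Q_j² : x ⪯ y + w/j}`. -/
def Bset (w : ℝ) (j : ℕ+) : Set (CP × CP) :=
  {p | p.1 ∈ Q j ∧ p.2 ∈ Q j ∧ nrel (w / (j : ℝ)) p.1 p.2}

/-- The barrel `B = ⋃_j B_j`. -/
def BigB (w : ℝ) : Set (CP × CP) := ⋃ (j : ℕ+), Bset w j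

/-- The map `Λ : Q_j → [0,∞]`, `a_j ↦ a/j`. -/
noncomputable def Lam (j : ℕ+) : CP → ℝ≥0∞
  | zero => 0
  | inf => ⊤
  | elt a _ => ENNReal.ofReal (a.1 / (j : ℝ))


lemma fnLam_nonneg (c : ℝ) (hc : 0 ≤ c) (k : ℕ+) (y : CP) : 0 ≤ fnLam c k y := by
  cases y with
  | zero => simp [fnLam]
  | inf => simp [fnLam]
  | elt b j =>
      simp only [fnLam]
      split
      · exact_mod_cast mul_nonneg hc b.2.le
      · exact le_top

/-- the extended functional `(1/w)~_k` lies in the polar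
`(w/k)°` of `(P, V)`; moreover if `a_i ⪯ b_j + v` with `j ∉ {0, k}` then
`(1/w)~_k(a_i) ≤ (1/w)~_k(b_j) + 1`. -/
theorem stmt11 (w : ℝ) (hw : 0 < w) (k : ℕ+) :
    (∀ x y : CP, nrel (w / (k : ℝ)) x y → fnLam w⁻¹ k x ≤ fnLam w⁻¹ k y + 1) ∧
    (∀ v : ℝ, 0 < v → ∀ x y : CP, y ≠ zero → (∀ b : Rpos, y ≠ elt b k) →
      nrel v x y → fnLam w⁻¹ k x ≤ fnLam w⁻¹ k y + 1) := by
  have hzero : ∀ y : CP, fnLam w⁻¹ k zero ≤ fnLam w⁻¹ k y + 1 := by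
    intro y
    have h0 : (fnLam w⁻¹ k zero : EReal) = 0 := rfl
    rw [h0]
    calc (0 : EReal) ≤ fnLam w⁻¹ k y := fnLam_nonneg _ (inv_nonneg.mpr hw.le) _ _
    _ ≤ fnLam w⁻¹ k y + 1 := by
        nth_rewrite 1 [← add_zero (fnLam w⁻¹ k y)]
        exact add_le_add le_rfl (by norm_num)
  have hinf : ∀ x : CP, fnLam w⁻¹ k x ≤ fnLam w⁻¹ k inf + 1 := by
    intro x
    have : (fnLam w⁻¹ k inf : EReal) = ⊤ := rfl
    rw [this, EReal.top_add_of_ne_bot (EReal.coe_one ▸ EReal.coe_ne_bot 1)]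
    exact le_top
  constructor
  · intro x y h
    cases x with
    | zero => exact hzero y
    | inf =>
        cases y with
        | inf => exact hinf inf
        | zero => exact absurd h (by simp [nrel])
        | elt b j => exact absurd h (by simp [nrel])
    | elt a i =>
        cases y with
        | inf => exact hinf _
        | zero => exact absurd h (by simp [nrel])
        | elt b j =>
            obtain ⟨hij, hab⟩ := h
            subst hij
            by_cases hik : i = k
            · subst hik
              simp only [fnLam, if_pos rfl]
              have hab' : a.1 ≤ b.1 + w := by
                have : (i : ℝ) * (w / (i : ℝ)) = w := by
                  field_simp
                rw [this] at hab
                exact hab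
              have : w⁻¹ * a.1 ≤ w⁻¹ * b.1 + 1 := by
                rw [← mul_le_mul_iff_right₀ hw]
                have hw' : w ≠ 0 := hw.ne'
                field_simp
                linarith
              calc ((w⁻¹ * a.1 : ℝ) : EReal) ≤ ((w⁻¹ * b.1 + 1 : ℝ) : EReal) := by
                    exact_mod_cast this
                _ = ((w⁻¹ * b.1 : ℝ) : EReal) + 1 := by
                    rw [← EReal.coe_one, ← EReal.coe_add]
            · simp only [fnLam, if_neg hik]
              rw [EReal.top_add_of_ne_bot (EReal.coe_one ▸ EReal.coe_ne_bot 1)]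
  · intro v hv x y hy0 hyk h
    cases y with
    | zero => exact absurd rfl hy0
    | inf => exact hinf x
    | elt b j =>
        cases x with
        | zero => exact hzero _
        | inf => exact absurd h (by simp [nrel])
        | elt a i =>
            obtain ⟨hij, _⟩ := h
            subst hij
            have hik : i ≠ k := fun hik => hyk b (by rw [hik])
            simp only [fnLam, if_neg hik]
            rw [EReal.top_add_of_ne_bot (EReal.coe_one ▸ EReal.coe_ne_bot 1)]

end CP
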